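/- Fix a real constant c with 0 < c ≤ 1 and define v₂(α) = 2·((2 − 2^α)/c)^(1/α) for α ∈ (0,1), using real powers. Then c·v₂(α)/(1 − α) tends to 4·log 2 as α tends to 1 from the left, where log denotes the natural logarithm. -/

import Mathlib

open Real Filter Set Topology

private lemma aux_sub : Tendsto (fun α : ℝ => 1 - α) (𝓝[<] (1:ℝ)) (𝓝[>] (0:ℝ)) := by
  rw [tendsto_nhdsWithin_iff]
  constructor
  · have : Tendsto (fun α : ℝ => 1 - α) (𝓝 (1:ℝ)) (𝓝 (1-1:ℝ)) :=
      (continuous_const.sub continuous_id).tendsto 1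
    simpa using this.mono_left nhdsWithin_le_nhds
  · filter_upwards [self_mem_nhdsWithin] with α hα
    simp only [mem_Iio] at hα
    simpa [mem_Ioi] using hα

private lemma slope_lim :
    Tendsto (fun α : ℝ => (2 - (2:ℝ)^α)/(1-α)) (𝓝[<] (1:ℝ)) (𝓝 (2 * Real.log 2)) := by
  have hd : HasDerivAt (fun x : ℝ => (2:ℝ)^x) (2 * Real.log 2) 1 := by
    have := (hasStrictDerivAt_const_rpow (by norm_num : (0:ℝ) < 2) 1).hasDerivAt
    simpa using this
  have h := hasDerivAt_iff_tendsto_slope.mp hd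
  have h2 := h.mono_left (nhdsWithin_mono _ (fun x hx => ne_of_lt hx))
  have he : (fun α : ℝ => (2 - (2:ℝ)^α)/(1-α)) = slope (fun x : ℝ => (2:ℝ)^x) 1 := by
    funext α
    rw [slope_def_field, Real.rpow_one, ← neg_div_neg_eq]; ring_nf
  rw [he]; exact h2

private lemma ev_mem : ∀ᶠ α in 𝓝[<] (1:ℝ), α ∈ Ioo (1/2 : ℝ) 1 :=
  Ioo_mem_nhdsLT_of_mem (by constructor <;> norm_num)

private lemma pos_part {α : ℝ} (hα : α ∈ Ioo (1/2 : ℝ) 1) : 0 < 2 - (2:ℝ)^α := by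
  have : (2:ℝ)^α < 2^(1:ℝ) :=
    (Real.rpow_lt_rpow_left_iff (by norm_num : (1:ℝ) < 2)).mpr hα.2
  rw [Real.rpow_one] at this; linarith

private lemma log_part (c : ℝ) (hc0 : 0 < c) :
    Tendsto (fun α : ℝ => ((2 - (2:ℝ)^α)/c) ^ ((1-α)/α)) (𝓝[<] (1:ℝ)) (𝓝 1) := by
  set g : ℝ → ℝ := fun α =>
    α⁻¹ * ((1-α) * Real.log (1-α) + (1-α) * Real.log ((2 - (2:ℝ)^α)/(1-α))
      - (1-α) * Real.log c) with hg
  have L1 : Tendsto (fun α : ℝ => (1-α) * Real.log (1-α)) (𝓝[<] (1:ℝ)) (𝓝 0) := by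
    have h := (tendsto_log_mul_rpow_nhdsGT_zero zero_lt_one).comp aux_sub
    simpa [Function.comp_def, Real.rpow_one, mul_comm] using h
  have L2 : Tendsto (fun α : ℝ => (1-α) * Real.log ((2 - (2:ℝ)^α)/(1-α)))
      (𝓝[<] (1:ℝ)) (𝓝 (0 * Real.log (2 * Real.log 2))) := by
    have hlog : Tendsto (fun α : ℝ => Real.log ((2 - (2:ℝ)^α)/(1-α))) (𝓝[<] (1:ℝ))
        (𝓝 (Real.log (2 * Real.log 2))) := by
      have hpos : (0:ℝ) < 2 * Real.log 2 := by positivity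
      exact ((Real.continuousAt_log (ne_of_gt hpos)).tendsto).comp slope_lim
    have h0 : Tendsto (fun α : ℝ => 1 - α) (𝓝[<] (1:ℝ)) (𝓝 0) := by
      have := aux_sub; exact this.mono_right nhdsWithin_le_nhds
    exact h0.mul hlog
  have L3 : Tendsto (fun α : ℝ => (1-α) * Real.log c) (𝓝[<] (1:ℝ)) (𝓝 (0 * Real.log c)) := by
    have h0 : Tendsto (fun α : ℝ => 1 - α) (𝓝[<] (1:ℝ)) (𝓝 0) :=
      aux_sub.mono_right nhdsWithin_le_nhds
    exact h0.mul tendsto_const_nhds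
  have Linv : Tendsto (fun α : ℝ => 1/α) (𝓝[<] (1:ℝ)) (𝓝 1) := by
    have : Tendsto (fun α : ℝ => 1/α) (𝓝 (1:ℝ)) (𝓝 (1/1)) :=
      (continuousAt_const.div continuousAt_id (by norm_num)).tendsto
    simpa using this.mono_left nhdsWithin_le_nhds
  have hT : Tendsto g (𝓝[<] (1:ℝ)) (𝓝 0) := by
    have := Linv.mul ((L1.add L2).sub L3)
    simpa using this
  have hexp : Tendsto (fun α => Real.exp (g α)) (𝓝[<] (1:ℝ)) (𝓝 1) := by
    have := (Real.continuous_exp.tendsto 0).comp hT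
    simpa [Function.comp_def] using this
  refine hexp.congr' ?_
  filter_upwards [ev_mem] with α hα
  have hα0 : 0 < α := lt_trans (by norm_num) hα.1
  have h1α : 0 < 1 - α := by linarith [hα.2]
  have hnum := pos_part hα
  have hs : 0 < (2 - (2:ℝ)^α)/(1-α) := div_pos hnum h1α
  have hB : 0 < (2 - (2:ℝ)^α)/c := div_pos hnum hc0
  rw [Real.rpow_def_of_pos hB]
  congr 1
  have hlogB : Real.log ((2 - (2:ℝ)^α)/c)
      = Real.log (1-α) + Real.log ((2 - (2:ℝ)^α)/(1-α)) - Real.log c := by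
    rw [Real.log_div (ne_of_gt hnum) (ne_of_gt hc0)]
    have : (2 - (2:ℝ)^α) = (1-α) * ((2 - (2:ℝ)^α)/(1-α)) := by
      field_simp
    rw [this, Real.log_mul (ne_of_gt h1α) (ne_of_gt hs)]
    rw [← this]
  rw [hg]
  simp only
  rw [hlogB]
  field_simp

theorem budget_threshold_asymptotics
    (c : ℝ) (hc0 : 0 < c) (hc1 : c ≤ 1) :
    Filter.Tendsto
      (fun α : ℝ => c * (2 * ((2 - (2 : ℝ) ^ α) / c) ^ (1 / α)) / (1 - α))
      (nhdsWithin (1 : ℝ) (Set.Iio (1 : ℝ))) (nhds (4 * Real.log 2)) := by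
  have hmain : Tendsto
      (fun α : ℝ => 2 * ((2 - (2:ℝ)^α)/(1-α)) * ((2 - (2:ℝ)^α)/c) ^ ((1-α)/α))
      (𝓝[<] (1:ℝ)) (𝓝 (2 * (2 * Real.log 2) * 1)) :=
    (tendsto_const_nhds.mul slope_lim).mul (log_part c hc0)
  have h4 : (2 : ℝ) * (2 * Real.log 2) * 1 = 4 * Real.log 2 := by ring
  rw [h4] at hmain
  refine hmain.congr' ?_
  filter_upwards [ev_mem] with α hα
  have hα0 : 0 < α := lt_trans (by norm_num) hα.1
  have h1α : 0 < 1 - α := by linarith [hα.2]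
  have hnum := pos_part hα
  have hB : 0 < (2 - (2:ℝ)^α)/c := div_pos hnum hc0
  have hsplit : (1:ℝ)/α = 1 + (1-α)/α := by field_simp; ring
  have : ((2 - (2:ℝ)^α)/c) ^ ((1:ℝ)/α)
      = ((2 - (2:ℝ)^α)/c) * ((2 - (2:ℝ)^α)/c) ^ ((1-α)/α) := by
    rw [hsplit, Real.rpow_add hB, Real.rpow_one]
  rw [this]  -- goal direction: hmain side = f side? congr' : eventually g = f
  field_simp
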